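/- Let U ⊆ ℂ be open, φ : U → ℂ holomorphic, a ∈ ℂ, and define f₀(y) = −((y·φ'''(y) + 3φ''(y))·φ(y) + a·φ''(y))/6. Then for all y ∈ U the identity 6·[(4φ(y) − y·φ'(y) + 2a)·f₀(y) + y·φ(y)·f₀'(y)] = −[(y²·φ''''(y) + 8y·φ'''(y) + 12φ''(y))·φ(y)² + a·(3y·φ'''(y)·φ(y) + 10φ''(y)·φ(y) − y·φ''(y)·φ'(y)) + 2a²·φ''(y)] holds. In particular, (4φ − yφ' + 2a)f₀ + yφ·f₀' = 0 on U if and only if φ satisfies the fourth-order ODE (y²φ'''' + 8yφ''' + 12φ'')φ² + a(3yφ'''φ + 10φ''φ − yφ''φ') + 2a²φ'' = 0 on U. -/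
import Mathlib


/-- With `f₀ = −((yφ''' + 3φ'')φ + aφ'')/6`, the expression
`6·[(4φ − yφ' + 2a)f₀ + yφf₀']` equals
`−[(y²φ'''' + 8yφ''' + 12φ'')φ² + a(3yφ'''φ + 10φ''φ − yφ''φ') + 2a²φ'']`;
in particular the system `(4φ − yφ' + 2a)f₀ + yφf₀' = 0` is equivalent to the
fourth-order ODE `(y²φ'''' + 8yφ''' + 12φ'')φ² + a(3yφ'''φ + 10φ''φ − yφ''φ') + 2a²φ'' = 0`. -/
theorem fourth_order_ode_equivalence
    (U : Set ℂ) (hU : IsOpen U) (φ : ℂ → ℂ) (hφ : DifferentiableOn ℂ φ U) (a : ℂ) :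
    (fun f₀ : ℂ → ℂ =>
      (∀ y ∈ U,
        6 * ((4 * φ y - y * deriv φ y + 2 * a) * f₀ y + y * φ y * deriv f₀ y) =
          -((y ^ 2 * deriv (deriv (deriv (deriv φ))) y
              + 8 * y * deriv (deriv (deriv φ)) y
              + 12 * deriv (deriv φ) y) * (φ y) ^ 2
            + a * (3 * y * deriv (deriv (deriv φ)) y * φ y
                + 10 * deriv (deriv φ) y * φ y
                - y * deriv (deriv φ) y * deriv φ y)
            + 2 * a ^ 2 * deriv (deriv φ) y))
      ∧ ((∀ y ∈ U, (4 * φ y - y * deriv φ y + 2 * a) * f₀ y + y * φ y * deriv f₀ y = 0)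
          ↔ (∀ y ∈ U,
              (y ^ 2 * deriv (deriv (deriv (deriv φ))) y
                + 8 * y * deriv (deriv (deriv φ)) y
                + 12 * deriv (deriv φ) y) * (φ y) ^ 2
              + a * (3 * y * deriv (deriv (deriv φ)) y * φ y
                  + 10 * deriv (deriv φ) y * φ y
                  - y * deriv (deriv φ) y * deriv φ y)
              + 2 * a ^ 2 * deriv (deriv φ) y = 0)))
    (fun y => -((y * deriv (deriv (deriv φ)) y + 3 * deriv (deriv φ) y) * φ y
        + a * deriv (deriv φ) y) / 6) := by
  simp only
  have hA : AnalyticOnNhd ℂ φ U := hφ.analyticOnNhd hU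
  have hA1 : AnalyticOnNhd ℂ (deriv φ) U := hA.deriv
  have hA2 : AnalyticOnNhd ℂ (deriv (deriv φ)) U := hA1.deriv
  have hA3 : AnalyticOnNhd ℂ (deriv (deriv (deriv φ))) U := hA2.deriv
  have key : ∀ y ∈ U,
      6 * ((4 * φ y - y * deriv φ y + 2 * a) *
          (-((y * deriv (deriv (deriv φ)) y + 3 * deriv (deriv φ) y) * φ y
            + a * deriv (deriv φ) y) / 6)
        + y * φ y * deriv (fun y => -((y * deriv (deriv (deriv φ)) y
            + 3 * deriv (deriv φ) y) * φ y + a * deriv (deriv φ) y) / 6) y) =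
      -((y ^ 2 * deriv (deriv (deriv (deriv φ))) y
          + 8 * y * deriv (deriv (deriv φ)) y + 12 * deriv (deriv φ) y) * (φ y) ^ 2
        + a * (3 * y * deriv (deriv (deriv φ)) y * φ y + 10 * deriv (deriv φ) y * φ y
            - y * deriv (deriv φ) y * deriv φ y)
        + 2 * a ^ 2 * deriv (deriv φ) y) := by
    intro y hy
    have h0 : HasDerivAt φ (deriv φ y) y := ((hA y hy).differentiableAt).hasDerivAt
    have h1 : HasDerivAt (deriv φ) (deriv (deriv φ) y) y :=
      ((hA1 y hy).differentiableAt).hasDerivAt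
    have h2 : HasDerivAt (deriv (deriv φ)) (deriv (deriv (deriv φ)) y) y :=
      ((hA2 y hy).differentiableAt).hasDerivAt
    have h3 : HasDerivAt (deriv (deriv (deriv φ))) (deriv (deriv (deriv (deriv φ))) y) y :=
      ((hA3 y hy).differentiableAt).hasDerivAt
    have hd : HasDerivAt (fun y => -((y * deriv (deriv (deriv φ)) y
        + 3 * deriv (deriv φ) y) * φ y + a * deriv (deriv φ) y) / 6)
        (-(((1 * deriv (deriv (deriv φ)) y + y * deriv (deriv (deriv (deriv φ))) y)
            + 3 * deriv (deriv (deriv φ)) y) * φ y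
          + (y * deriv (deriv (deriv φ)) y + 3 * deriv (deriv φ) y) * deriv φ y
          + a * deriv (deriv (deriv φ)) y) / 6) y := by
      exact ((((((hasDerivAt_id' y).mul h3).add (h2.const_mul 3)).mul h0).add
        (h2.const_mul a)).neg).div_const 6
    rw [hd.deriv]
    ring
  constructor
  · exact key
  · constructor
    · intro h y hy
      have k := key y hy
      rw [h y hy, mul_zero] at k
      linear_combination k
    · intro h y hy
      have k := key y hy
      rw [h y hy] at k
      linear_combination k / 6
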